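/- Let d be odd and Δ ≥ 2. In the Petersen-graph ILP construction (constraint matrix A ∈ ℤ^{15d×(6+15d)}_{≥0} with ‖A‖_∞ = Δ and right-hand side b with block-row j equal to Δ^{j-1}·(1,…,1)), the vector z taking each of the 6 matching columns with coefficient 1/2, each odd block of identity columns with coefficient 0, and each even block j with coefficient Δ^{j-1}, is a nonnegative rational solution of Az = b. -/

import Mathlib

/-- The Petersen graph, presented as the Kneser graph `K(5,2)`: vertices are the
2-element subsets of `Fin 5`, adjacent iff disjoint. -/
def Petersen : SimpleGraph {s : Finset (Fin 5) // s.card = 2} where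
  Adj a b := Disjoint a.1 b.1
  symm := ⟨fun a b h => h.symm⟩
  loopless := ⟨fun a h => by
    have h := Finset.disjoint_self_iff_empty _ |>.mp h
    have h2 := a.2
    rw [h] at h2
    simp at h2⟩

open scoped Classical

/-- The `15d × (6+15d)` block matrix of the Petersen-graph construction: the
first 6 columns are `(M; 0; …; 0)` with `M` the edge/matching incidence matrix
of the Petersen graph; the remaining `d` blocks of 15 columns contribute `I₁₅`
in block-row `j` and `Δ·I₁₅` in block-row `j+1`. -/
noncomputable def blockMatQ (d : ℕ) (Δ : ℤ) (eE : Fin 15 ≃ Petersen.edgeSet)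
    (eM : Fin 6 ≃ {M : Petersen.Subgraph // M.IsPerfectMatching}) :
    Matrix (Fin (15 * d)) (Fin (6 + 15 * d)) ℚ :=
  fun r c =>
    if hc : (c : ℕ) < 6 then
      (if hr : (r : ℕ) < 15 then
        (if (eE ⟨(r : ℕ), hr⟩ : Sym2 _) ∈ (eM ⟨(c : ℕ), hc⟩).1.edgeSet then 1 else 0)
      else 0)
    else if (r : ℕ) + 6 = (c : ℕ) then 1
    else if (r : ℕ) + 6 = (c : ℕ) + 15 then (Δ : ℚ) else 0

/-- The right-hand side whose block-row `j` equals `Δ^(j-1) · (1,…,1) ∈ ℚ^15`. -/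
def blockRhs (d : ℕ) (Δ : ℤ) : Fin (15 * d) → ℚ := fun r => (Δ : ℚ) ^ ((r : ℕ) / 15)

/-- The fractional solution of the Petersen-graph construction: each of the 6
matching columns with coefficient `1/2`, each odd block of identity columns
(0-indexed: each even block) with coefficient `0`, and each even block `j`
(0-indexed: odd block `j'`) with coefficient `Δ^{j'}`. -/
def fracSol (d : ℕ) (Δ : ℤ) : Fin (6 + 15 * d) → ℚ := fun c =>
  if (c : ℕ) < 6 then 1 / 2
  else if Odd (((c : ℕ) - 6) / 15) then (Δ : ℚ) ^ (((c : ℕ) - 6) / 15) else 0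

abbrev V5 := {s : Finset (Fin 5) // s.card = 2}

def vmap (σ : Equiv.Perm (Fin 5)) (v : V5) : V5 :=
  ⟨v.1.map σ.toEmbedding, by rw [Finset.card_map]; exact v.2⟩

lemma vmap_vmap (σ τ : Equiv.Perm (Fin 5)) (v : V5) :
    vmap σ (vmap τ v) = vmap (σ * τ) v := by
  apply Subtype.ext
  simp only [vmap, Finset.map_map]
  rfl

lemma vmap_one (v : V5) : vmap 1 v = v := by
  apply Subtype.ext
  simp only [vmap]
  ext x
  simp
  exact Iff.rfl

lemma vmap_cancel (σ : Equiv.Perm (Fin 5)) (v : V5) : vmap σ⁻¹ (vmap σ v) = v := by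
  rw [vmap_vmap, inv_mul_cancel, vmap_one]

def v01 : V5 := ⟨{0,1}, rfl⟩
def v23 : V5 := ⟨{2,3}, rfl⟩

set_option maxRecDepth 10000 in
theorem base_trans : ∀ a b : V5, Disjoint a.1 b.1 →
    ∃ σ : Equiv.Perm (Fin 5), vmap σ v01 = a ∧ vmap σ v23 = b := by decide

lemma edge_trans (e1 e2 : Petersen.edgeSet) :
    ∃ σ : Equiv.Perm (Fin 5), Sym2.map (vmap σ) e1.1 = e2.1 := by
  obtain ⟨e1, h1⟩ := e1; obtain ⟨e2, h2⟩ := e2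
  induction e1 using Sym2.ind with
  | _ a b =>
  induction e2 using Sym2.ind with
  | _ a' b' =>
  rw [SimpleGraph.mem_edgeSet] at h1 h2
  obtain ⟨σ1, hσ1a, hσ1b⟩ := base_trans a b h1
  obtain ⟨σ2, hσ2a, hσ2b⟩ := base_trans a' b' h2
  refine ⟨σ2 * σ1⁻¹, ?_⟩
  simp only [Sym2.map_pair_eq]
  rw [← vmap_vmap, ← vmap_vmap, ← hσ1a, ← hσ1b, vmap_cancel, vmap_cancel, hσ2a, hσ2b]

def pAut (σ : Equiv.Perm (Fin 5)) : Petersen ≃g Petersen where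
  toFun := vmap σ
  invFun := vmap σ⁻¹
  left_inv v := vmap_cancel σ v
  right_inv v := by conv_rhs => rw [← vmap_cancel σ⁻¹ v]; rw [inv_inv]
  map_rel_iff' := by
    intro a b
    show Disjoint _ _ ↔ Disjoint a.1 b.1
    exact Finset.disjoint_map _

lemma pm_map (σ : Equiv.Perm (Fin 5)) {M : Petersen.Subgraph} (hM : M.IsPerfectMatching) :
    (M.map (pAut σ).toHom).IsPerfectMatching := by
  constructor
  · exact (SimpleGraph.Subgraph.Iso.isMatching_map (pAut σ)).mpr hM.1
  · intro v
    rw [SimpleGraph.Subgraph.map_verts]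
    exact ⟨vmap σ⁻¹ v, hM.2 _, by
      show vmap σ (vmap σ⁻¹ v) = v
      rw [vmap_vmap, mul_inv_cancel, vmap_one]⟩

lemma mem_map_edge (σ : Equiv.Perm (Fin 5)) {M : Petersen.Subgraph} {e : Sym2 V5}
    (h : e ∈ M.edgeSet) : Sym2.map (vmap σ) e ∈ (M.map (pAut σ).toHom).edgeSet := by
  induction e using Sym2.ind with
  | _ a b =>
  rw [Sym2.map_pair_eq, SimpleGraph.Subgraph.mem_edgeSet] at *
  exact ⟨a, b, h, rfl, rfl⟩

lemma hom_cancel (σ : Equiv.Perm (Fin 5)) :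
    (pAut σ⁻¹).toHom.comp (pAut σ).toHom = SimpleGraph.Hom.id := by
  apply DFunLike.ext
  intro v
  exact vmap_cancel σ v

lemma subgraph_map_cancel (σ : Equiv.Perm (Fin 5)) (M : Petersen.Subgraph) :
    (M.map (pAut σ).toHom).map (pAut σ⁻¹).toHom = M := by
  rw [← SimpleGraph.Subgraph.map_comp, hom_cancel, SimpleGraph.Subgraph.map_id]

/-- number of perfect matchings containing a given edge -/
noncomputable def kPM (e : Sym2 V5) : ℕ :=
  Nat.card {M : {M : Petersen.Subgraph // M.IsPerfectMatching} // e ∈ M.1.edgeSet}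

lemma sym2_map_cancel (σ : Equiv.Perm (Fin 5)) (e : Sym2 V5) :
    Sym2.map (vmap σ⁻¹) (Sym2.map (vmap σ) e) = e := by
  rw [Sym2.map_map]
  have : (vmap σ⁻¹ ∘ vmap σ) = id := funext fun v => vmap_cancel σ v
  rw [this, Sym2.map_id, id]

def matchEquiv (σ : Equiv.Perm (Fin 5)) (e1 e2 : Sym2 V5) (h : Sym2.map (vmap σ) e1 = e2) :
    {M : {M : Petersen.Subgraph // M.IsPerfectMatching} // e1 ∈ M.1.edgeSet} ≃
    {M : {M : Petersen.Subgraph // M.IsPerfectMatching} // e2 ∈ M.1.edgeSet} where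
  toFun M := ⟨⟨M.1.1.map (pAut σ).toHom, pm_map σ M.1.2⟩, h ▸ mem_map_edge σ M.2⟩
  invFun M := ⟨⟨M.1.1.map (pAut σ⁻¹).toHom, pm_map σ⁻¹ M.1.2⟩, by
    have h2 : Sym2.map (vmap σ⁻¹) e2 = e1 := by rw [← h]; exact sym2_map_cancel σ e1
    exact h2 ▸ mem_map_edge σ⁻¹ M.2⟩
  left_inv M := by
    apply Subtype.ext; apply Subtype.ext
    exact subgraph_map_cancel σ M.1.1
  right_inv M := by
    apply Subtype.ext; apply Subtype.ext
    have := subgraph_map_cancel σ⁻¹ M.1.1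
    rwa [inv_inv] at this

lemma kPM_const (e1 e2 : Petersen.edgeSet) : kPM e1.1 = kPM e2.1 := by
  obtain ⟨σ, hσ⟩ := edge_trans e1 e2
  exact Nat.card_congr (matchEquiv σ e1.1 e2.1 hσ)

lemma card_V5 : Nat.card V5 = 10 := by
  rw [Nat.card_eq_fintype_card]
  rfl

lemma fiber_two {M : Petersen.Subgraph} (hM : M.IsPerfectMatching) (E : M.edgeSet) :
    Nat.card {v : M.verts // hM.1.toEdge v = E} = 2 := by
  obtain ⟨e, he⟩ := E
  induction e using Sym2.ind with
  | _ a b =>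
  have hab : M.Adj a b := he
  have hne : a ≠ b := hab.ne
  rw [Nat.card_eq_two_iff]
  refine ⟨⟨⟨a, M.edge_vert hab⟩, ?_⟩, ⟨⟨b, M.edge_vert hab.symm⟩, ?_⟩, ?_, ?_⟩
  · exact hM.1.toEdge_eq_of_adj hab
  · rw [hM.1.toEdge_eq_of_adj hab.symm]
    exact Subtype.ext (Sym2.eq_swap)
  · intro hcon
    exact hne (congrArg (fun x => (x.1 : V5)) hcon)
  · apply Set.eq_univ_iff_forall.mpr
    rintro ⟨⟨v, hv⟩, hx⟩
    have hmem : v ∈ (s(a, b) : Sym2 V5) := by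
      rw [← show ((hM.1.toEdge ⟨v, hv⟩ : M.edgeSet) : Sym2 V5) = s(a,b) from congrArg Subtype.val hx]
      exact Sym2.mem_mk_left v _
    rcases Sym2.mem_iff.mp hmem with rfl | rfl
    · left
      apply Subtype.ext; apply Subtype.ext; rfl
    · right
      apply Subtype.ext; apply Subtype.ext; rfl

lemma card_edgeSet_five {M : Petersen.Subgraph} (hM : M.IsPerfectMatching) :
    Nat.card M.edgeSet = 5 := by
  have h10 : Nat.card M.verts = 10 := by
    have := hM.2.verts_eq_univ
    rw [this]
    rw [Nat.card_congr (Equiv.Set.univ V5)]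
    exact card_V5
  have hsig : Nat.card M.verts =
      Nat.card (Σ E : M.edgeSet, {v : M.verts // hM.1.toEdge v = E}) :=
    Nat.card_congr (Equiv.sigmaFiberEquiv hM.1.toEdge).symm
  rw [hsig] at h10
  rw [Nat.card_eq_fintype_card, Fintype.card_sigma] at h10
  have : ∀ E : M.edgeSet, Fintype.card {v : M.verts // hM.1.toEdge v = E} = 2 := by
    intro E
    rw [← Nat.card_eq_fintype_card]
    exact fiber_two hM E
  simp only [this, Finset.sum_const, Finset.card_univ, smul_eq_mul] at h10
  rw [← Nat.card_eq_fintype_card] at h10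
  omega

def edgeSub (M : Petersen.Subgraph) :
    {E : Petersen.edgeSet // (E : Sym2 V5) ∈ M.edgeSet} ≃ M.edgeSet where
  toFun x := ⟨x.1.1, x.2⟩
  invFun y := ⟨⟨y.1, M.edgeSet_subset y.2⟩, y.2⟩
  left_inv x := by apply Subtype.ext; apply Subtype.ext; rfl
  right_inv y := rfl

lemma filter_card_eq_kPM (eM : Fin 6 ≃ {M : Petersen.Subgraph // M.IsPerfectMatching})
    (e : Sym2 V5) :
    (Finset.univ.filter fun c : Fin 6 => e ∈ (eM c).1.edgeSet).card = kPM e := by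
  rw [← Fintype.card_subtype, ← Nat.card_eq_fintype_card, kPM]
  exact Nat.card_congr (Equiv.subtypeEquiv eM fun c => Iff.rfl)

lemma sum_kPM (eE : Fin 15 ≃ Petersen.edgeSet)
    (eM : Fin 6 ≃ {M : Petersen.Subgraph // M.IsPerfectMatching}) :
    ∑ r : Fin 15, kPM (eE r).1 = 30 := by
  have step1 : ∀ r : Fin 15, kPM (eE r).1 =
      ∑ c : Fin 6, (if ((eE r).1 : Sym2 V5) ∈ (eM c).1.edgeSet then 1 else 0) := by
    intro r
    rw [← filter_card_eq_kPM eM]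
    rw [Finset.sum_boole, Nat.cast_id]
  have step2 : ∀ c : Fin 6, (∑ r : Fin 15,
      if ((eE r).1 : Sym2 V5) ∈ (eM c).1.edgeSet then 1 else 0) = 5 := by
    intro c
    rw [Finset.sum_boole, Nat.cast_id, ← Fintype.card_subtype, ← Nat.card_eq_fintype_card]
    have heq := Nat.card_congr ((Equiv.subtypeEquiv eE (fun r => Iff.rfl :
      ∀ r : Fin 15, ((eE r).1 : Sym2 V5) ∈ (eM c).1.edgeSet ↔
        ((eE r : Petersen.edgeSet) : Sym2 V5) ∈ (eM c).1.edgeSet)).trans (edgeSub (eM c).1))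
    rw [heq]
    exact card_edgeSet_five (eM c).2
  calc ∑ r : Fin 15, kPM (eE r).1
      = ∑ r : Fin 15, ∑ c : Fin 6,
          (if ((eE r).1 : Sym2 V5) ∈ (eM c).1.edgeSet then 1 else 0) := by
        exact Finset.sum_congr rfl fun r _ => step1 r
    _ = ∑ c : Fin 6, ∑ r : Fin 15,
          (if ((eE r).1 : Sym2 V5) ∈ (eM c).1.edgeSet then 1 else 0) := Finset.sum_comm
    _ = ∑ c : Fin 6, 5 := Finset.sum_congr rfl fun c _ => step2 c
    _ = 30 := by simp

lemma kPM_two (eE : Fin 15 ≃ Petersen.edgeSet)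
    (eM : Fin 6 ≃ {M : Petersen.Subgraph // M.IsPerfectMatching})
    (e : Petersen.edgeSet) : kPM e.1 = 2 := by
  have hsum := sum_kPM eE eM
  have hconst : ∀ r : Fin 15, kPM (eE r).1 = kPM e.1 := fun r => kPM_const (eE r) e
  rw [Finset.sum_congr rfl (fun r _ => hconst r), Finset.sum_const] at hsum
  simp only [Finset.card_univ, Fintype.card_fin, smul_eq_mul] at hsum
  omega

lemma matching_count (eE : Fin 15 ≃ Petersen.edgeSet)
    (eM : Fin 6 ≃ {M : Petersen.Subgraph // M.IsPerfectMatching})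
    (e : Petersen.edgeSet) :
    (Finset.univ.filter fun c : Fin 6 => (e : Sym2 V5) ∈ (eM c).1.edgeSet).card = 2 := by
  rw [filter_card_eq_kPM eM, kPM_two eE eM]

/-- The vector taking each matching column with coefficient `1/2`, each odd
block of identity columns with coefficient `0` and each even block `j` with
coefficient `Δ^{j-1}` is a nonnegative rational solution of `Az = b`. -/
theorem stmt13 (d : ℕ) (hd : Odd d) (Δ : ℤ) (hΔ : 2 ≤ Δ)
    (eE : Fin 15 ≃ Petersen.edgeSet)
    (eM : Fin 6 ≃ {M : Petersen.Subgraph // M.IsPerfectMatching}) :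
    (∀ c, 0 ≤ fracSol d Δ c) ∧
      (blockMatQ d Δ eE eM).mulVec (fracSol d Δ) = blockRhs d Δ := by
  have hΔ0 : (0 : ℚ) ≤ (Δ : ℚ) := by exact_mod_cast le_trans (by norm_num) hΔ
  constructor
  · intro c
    unfold fracSol
    split_ifs
    · norm_num
    · exact pow_nonneg hΔ0 _
    · exact le_refl 0
  · funext r
    show ∑ c, blockMatQ d Δ eE eM r c * fracSol d Δ c = blockRhs d Δ r
    rw [Fin.sum_univ_add]
    by_cases hr : (r : ℕ) < 15
    -- block row 0
    · have h1 : ∀ i : Fin 6,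
          blockMatQ d Δ eE eM r (Fin.castAdd (15 * d) i) * fracSol d Δ (Fin.castAdd (15 * d) i) =
          (if (eE ⟨(r : ℕ), hr⟩ : Sym2 V5) ∈ (eM i).1.edgeSet then (1 : ℚ) else 0) * (1 / 2) := by
        intro i
        unfold blockMatQ fracSol
        simp only [Fin.coe_castAdd]
        rw [dif_pos i.isLt, dif_pos hr, if_pos i.isLt]
      have h2 : ∀ i : Fin (15 * d),
          blockMatQ d Δ eE eM r (Fin.natAdd 6 i) * fracSol d Δ (Fin.natAdd 6 i) = 0 := by
        intro i
        unfold blockMatQ fracSol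
        simp only [Fin.coe_natAdd]
        rw [dif_neg (by omega)]
        by_cases hir : (r : ℕ) + 6 = 6 + (i : ℕ)
        · rw [if_pos hir, if_neg (by omega),
            if_neg (by rw [Nat.odd_iff]; omega), mul_zero]
        · rw [if_neg hir, if_neg (by omega), zero_mul]
      rw [Finset.sum_congr rfl fun i _ => h1 i, Finset.sum_congr rfl fun i _ => h2 i,
        ← Finset.sum_mul, Finset.sum_boole, matching_count eE eM (eE ⟨(r : ℕ), hr⟩)]
      unfold blockRhs
      rw [show (r : ℕ) / 15 = 0 from by omega]
      norm_num
    -- later block rows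
    · have h1 : ∀ i : Fin 6,
          blockMatQ d Δ eE eM r (Fin.castAdd (15 * d) i) * fracSol d Δ (Fin.castAdd (15 * d) i)
            = 0 := by
        intro i
        unfold blockMatQ
        simp only [Fin.coe_castAdd]
        rw [dif_pos i.isLt, dif_neg hr, zero_mul]
      set j : ℕ := (r : ℕ) / 15 with hj
      have hj1 : 1 ≤ j := by omega
      have hrlt : (r : ℕ) < 15 * d := r.isLt
      set i2 : Fin (15 * d) := ⟨(r : ℕ) - 15, by omega⟩ with hi2
      have hne : i2 ≠ r := by
        intro hcon
        have := congrArg (fun x : Fin (15 * d) => (x : ℕ)) hcon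
        simp only [hi2] at this
        omega
      have h2 : ∀ i : Fin (15 * d),
          blockMatQ d Δ eE eM r (Fin.natAdd 6 i) * fracSol d Δ (Fin.natAdd 6 i) =
          (if i = r then (if Odd j then (Δ : ℚ) ^ j else 0) else 0) +
          (if i = i2 then (Δ : ℚ) * (if Odd (j - 1) then (Δ : ℚ) ^ (j - 1) else 0) else 0) := by
        intro i
        unfold blockMatQ fracSol
        simp only [Fin.coe_natAdd]
        rw [dif_neg (by omega)]
        by_cases hir : i = r
        · have hiv : (i : ℕ) = (r : ℕ) := by rw [hir]
          have hnot : ¬(i = i2) := by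
            rw [hir]; exact fun hc => hne hc.symm
          rw [if_pos (show (r : ℕ) + 6 = 6 + (i : ℕ) from by omega),
            if_neg (show ¬(6 + (i : ℕ) < 6) from by omega),
            show (6 + (i : ℕ) - 6) / 15 = j from by omega,
            if_pos hir, if_neg hnot]
          ring
        · by_cases hii : i = i2
          · have hiv : (i : ℕ) = (r : ℕ) - 15 := by rw [hii]
            rw [if_neg (show ¬((r : ℕ) + 6 = 6 + (i : ℕ)) from by omega),
              if_pos (show (r : ℕ) + 6 = 6 + (i : ℕ) + 15 from by omega),
              if_neg (show ¬(6 + (i : ℕ) < 6) from by omega),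
              show (6 + (i : ℕ) - 6) / 15 = j - 1 from by omega,
              if_neg hir, if_pos hii]
            ring
          · have hiv : (i : ℕ) ≠ (r : ℕ) := fun hc => hir (Fin.ext hc)
            have hiv2 : (i : ℕ) ≠ (r : ℕ) - 15 := fun hc => hii (Fin.ext hc)
            rw [if_neg (show ¬((r : ℕ) + 6 = 6 + (i : ℕ)) from by omega),
              if_neg (show ¬((r : ℕ) + 6 = 6 + (i : ℕ) + 15) from by omega),
              if_neg hir, if_neg hii, zero_mul]
            ring
      rw [Finset.sum_congr rfl fun i _ => h1 i, Finset.sum_congr rfl fun i _ => h2 i,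
        Finset.sum_add_distrib, Finset.sum_ite_eq' Finset.univ r
          (fun _ => (if Odd j then (Δ : ℚ) ^ j else 0)),
        Finset.sum_ite_eq' Finset.univ i2
          (fun _ => (Δ : ℚ) * (if Odd (j - 1) then (Δ : ℚ) ^ (j - 1) else 0))]
      simp only [Finset.mem_univ, if_true, Finset.sum_const, Finset.card_univ, smul_zero]
      unfold blockRhs
      rw [← hj]
      by_cases hodd : Odd j
      · rw [if_pos hodd, if_neg (by
          rw [Nat.odd_iff] at hodd ⊢
          omega)]
        ring
      · rw [if_neg hodd, if_pos (by
          rw [Nat.odd_iff] at hodd ⊢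
          omega)]
        have hpow : (Δ : ℚ) ^ j = (Δ : ℚ) ^ (j - 1) * (Δ : ℚ) := by
          rw [← pow_succ, show j - 1 + 1 = j from by omega]
        rw [hpow]
        ring
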